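/- Let L be a Lie algebra and I, J locally nilpotent ideals of L. Then I + J is a locally nilpotent ideal of L. -/

import Mathlib

open LieAlgebra Submodule

/-- A subset `T` of a Lie algebra is locally nilpotent if every finitely generated Lie
subalgebra with generators in `T` is nilpotent. -/
def LieSetLocallyNilpotent (K : Type*) {L : Type*} [Field K] [LieRing L] [LieAlgebra K L]
    (T : Set L) : Prop :=
  ∀ s : Finset L, (s : Set L) ⊆ T →
    LieRing.IsNilpotent ↥(LieSubalgebra.lieSpan K L (s : Set L))

section Hartley

variable {K L : Type*} [Field K] [LieRing L] [LieAlgebra K L]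

/-- Span of brackets of two submodules. -/
def bkSpan (K : Type*) {L : Type*} [Field K] [LieRing L] [LieAlgebra K L]
    (S T : Submodule K L) : Submodule K L :=
  Submodule.span K {m | ∃ a ∈ S, ∃ b ∈ T, ⁅a, b⁆ = m}

namespace bkSpan

variable {S T U V : Submodule K L}

lemma le_iff : bkSpan K S T ≤ U ↔ ∀ a ∈ S, ∀ b ∈ T, ⁅a, b⁆ ∈ U := by
  rw [bkSpan, Submodule.span_le]
  constructor
  · intro h a ha b hb; exact h ⟨a, ha, b, hb, rfl⟩
  · rintro h _ ⟨a, ha, b, hb, rfl⟩; exact h a ha b hb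

lemma lie_mem (ha : a ∈ S) (hb : b ∈ T) : ⁅a, b⁆ ∈ bkSpan K S T :=
  Submodule.subset_span ⟨a, ha, b, hb, rfl⟩

lemma mono (h1 : S ≤ U) (h2 : T ≤ V) : bkSpan K S T ≤ bkSpan K U V :=
  le_iff.2 fun a ha b hb => lie_mem (h1 ha) (h2 hb)

lemma comm_le : bkSpan K S T ≤ bkSpan K T S := by
  refine le_iff.2 fun a ha b hb => ?_
  have : ⁅a, b⁆ = (-1 : K) • ⁅b, a⁆ := by simp [lie_skew]
  rw [this]
  exact Submodule.smul_mem _ _ (lie_mem hb ha)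

lemma sup_left : bkSpan K (S ⊔ T) U ≤ bkSpan K S U ⊔ bkSpan K T U := by
  refine le_iff.2 fun a ha b hb => ?_
  obtain ⟨x, hx, y, hy, rfl⟩ := Submodule.mem_sup.1 ha
  rw [add_lie]
  exact Submodule.add_mem _ (Submodule.mem_sup_left (lie_mem hx hb))
    (Submodule.mem_sup_right (lie_mem hy hb))

lemma sup_right : bkSpan K S (T ⊔ U) ≤ bkSpan K S T ⊔ bkSpan K S U := by
  refine le_iff.2 fun a ha b hb => ?_
  obtain ⟨x, hx, y, hy, rfl⟩ := Submodule.mem_sup.1 hb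
  rw [lie_add]
  exact Submodule.add_mem _ (Submodule.mem_sup_left (lie_mem ha hx))
    (Submodule.mem_sup_right (lie_mem ha hy))

lemma span_span (s t : Set L) :
    bkSpan K (span K s) (span K t) = span K {m | ∃ a ∈ s, ∃ b ∈ t, ⁅a, b⁆ = m} := by
  apply le_antisymm
  · refine le_iff.2 fun a ha b hb => ?_
    induction ha using Submodule.span_induction with
    | mem x hx =>
      induction hb using Submodule.span_induction with
      | mem y hy => exact Submodule.subset_span ⟨x, hx, y, hy, rfl⟩
      | zero => simp
      | add y z _ _ h1 h2 => rw [lie_add]; exact Submodule.add_mem _ h1 h2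
      | smul c y _ h => rw [lie_smul]; exact Submodule.smul_mem _ _ h
    | zero => simp
    | add x y _ _ h1 h2 => rw [add_lie]; exact Submodule.add_mem _ h1 h2
    | smul c x _ h => rw [smul_lie]; exact Submodule.smul_mem _ _ h
  · rw [Submodule.span_le]
    rintro _ ⟨a, ha, b, hb, rfl⟩
    exact lie_mem (Submodule.subset_span ha) (Submodule.subset_span hb)

lemma fg (hS : S.FG) (hT : T.FG) : (bkSpan K S T).FG := by
  obtain ⟨s, rfl⟩ := hS
  obtain ⟨t, rfl⟩ := hT
  rw [span_span]
  have : {m | ∃ a ∈ (s : Set L), ∃ b ∈ (t : Set L), ⁅a, b⁆ = m} =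
      (fun p : L × L => ⁅p.1, p.2⁆) '' ((s : Set L) ×ˢ (t : Set L)) := by
    ext m
    constructor
    · rintro ⟨a, ha, b, hb, rfl⟩; exact ⟨(a, b), ⟨ha, hb⟩, rfl⟩
    · rintro ⟨⟨a, b⟩, ⟨ha, hb⟩, rfl⟩; exact ⟨a, ha, b, hb, rfl⟩
  rw [this]
  exact Submodule.fg_span ((s.finite_toSet.prod t.finite_toSet).image _)

end bkSpan

/-- External lower central series of a Lie subalgebra. -/
def extLcs (H : LieSubalgebra K L) : ℕ → Submodule K L
  | 0 => H.toSubmodule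
  | n + 1 => bkSpan K H.toSubmodule (extLcs H n)

lemma extLcs_le (H : LieSubalgebra K L) : ∀ n, extLcs H n ≤ H.toSubmodule
  | 0 => le_rfl
  | n + 1 => bkSpan.le_iff.2 fun a ha b hb => H.lie_mem ha (extLcs_le H n hb)

lemma extLcs_succ_le (H : LieSubalgebra K L) (n : ℕ) : extLcs H (n + 1) ≤ extLcs H n := by
  induction n with
  | zero => exact extLcs_le H 1
  | succ n ih => exact bkSpan.mono le_rfl ih

lemma extLcs_eq_map (H : LieSubalgebra K L) (n : ℕ) :
    extLcs H n =
      (LieSubmodule.toSubmodule (LieModule.lowerCentralSeries K ↥H ↥H n)).map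
        H.toSubmodule.subtype := by
  induction n with
  | zero =>
    simp only [extLcs, LieModule.lowerCentralSeries]
    erw [LieSubmodule.top_toSubmodule, Submodule.map_top, Submodule.range_subtype]
  | succ n ih =>
    show bkSpan K H.toSubmodule (extLcs H n) = _
    rw [ih]
    apply le_antisymm
    · refine bkSpan.le_iff.2 fun a ha b hb => ?_
      obtain ⟨y, hy, rfl⟩ := hb
      refine ⟨⁅(⟨a, ha⟩ : H), y⁆, ?_, rfl⟩
      have hy' : y ∈ LieModule.lowerCentralSeries K ↥H ↥H n := hy
      show (⁅(⟨a, ha⟩ : H), y⁆ : ↥H) ∈ LieModule.lowerCentralSeries K ↥H ↥H (n + 1)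
      rw [LieModule.lowerCentralSeries_succ]
      exact LieSubmodule.lie_mem_lie (LieSubmodule.mem_top _) hy'
    · rintro x ⟨y, hy, rfl⟩
      have hy' : y ∈ LieModule.lowerCentralSeries K ↥H ↥H (n + 1) := hy
      rw [LieModule.lowerCentralSeries_succ, ← LieSubmodule.mem_toSubmodule,
        LieSubmodule.lieIdeal_oper_eq_linear_span'] at hy'
      clear hy
      induction hy' using Submodule.span_induction with
      | mem m hm =>
        obtain ⟨u, -, v, hv, rfl⟩ := hm
        exact bkSpan.lie_mem u.2 ⟨v, (LieSubmodule.mem_toSubmodule _).mpr hv, rfl⟩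
      | zero => simp
      | add u v hu hv h1 h2 => rw [map_add]; exact Submodule.add_mem _ h1 h2
      | smul c u hu h => rw [map_smul]; exact Submodule.smul_mem _ _ h

lemma isNilpotent_iff_extLcs (H : LieSubalgebra K L) :
    LieRing.IsNilpotent ↥H ↔ ∃ n, extLcs H n = ⊥ := by
  constructor
  · intro h
    obtain ⟨n, hn⟩ := (LieModule.isNilpotent_iff K ↥H ↥H).mp h
    refine ⟨n, ?_⟩
    rw [extLcs_eq_map, hn]
    simp
  · rintro ⟨n, hn⟩
    refine (LieModule.isNilpotent_iff K ↥H ↥H).mpr ⟨n, ?_⟩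
    rw [extLcs_eq_map] at hn
    rw [← LieSubmodule.toSubmodule_inj, LieSubmodule.bot_toSubmodule, eq_bot_iff]
    intro x hx
    have hmem : H.toSubmodule.subtype x ∈ (⊥ : Submodule K L) :=
      hn ▸ Submodule.mem_map_of_mem hx
    rw [Submodule.mem_bot] at hmem ⊢
    exact Subtype.ext hmem


section Ideals

variable {I : LieIdeal K L}

lemma lemE (hI : LieSetLocallyNilpotent K (I : Set L)) {u : L} (hu : u ∈ I) (v : L) :
    ∃ n, ((ad K L u) ^ n) v = 0 := by
  classical
  set s : Finset L := {u, ⁅u, v⁆} with hs_def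
  have hsub : (s : Set L) ⊆ (I : Set L) := by
    intro x hx
    simp only [hs_def, Finset.coe_insert, Finset.coe_singleton, Set.mem_insert_iff,
      Set.mem_singleton_iff] at hx
    rcases hx with rfl | rfl
    · exact hu
    · have : ⁅v, u⁆ ∈ I := I.lie_mem hu
      have h2 : -⁅v, u⁆ ∈ I := neg_mem this
      simpa only [lie_skew, SetLike.mem_coe] using h2
  set N := LieSubalgebra.lieSpan K L (s : Set L) with hN_def
  have hnil : LieRing.IsNilpotent ↥N := hI s hsub
  obtain ⟨k, hk⟩ := LieAlgebra.nilpotent_ad_of_nilpotent_algebra K ↥N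
  have humem : u ∈ N := LieSubalgebra.subset_lieSpan (by simp [hs_def])
  have hwmem : ⁅u, v⁆ ∈ N := LieSubalgebra.subset_lieSpan (by simp [hs_def])
  set uN : ↥N := ⟨u, humem⟩
  set wN : ↥N := ⟨⁅u, v⁆, hwmem⟩
  have key : ∀ m : ℕ, ((ad K L u) ^ m) ⁅u, v⁆ = ((ad K ↥N uN ^ m) wN : L) := by
    intro m
    induction m with
    | zero => simp [wN]
    | succ m ih =>
      rw [pow_succ', pow_succ']
      simp only [Module.End.mul_apply]
      rw [show ((ad K ↥N uN) ((ad K ↥N uN ^ m) wN) : L) = ⁅u, (((ad K ↥N uN ^ m) wN : ↥N) : L)⁆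
        from rfl, ← ih]
      rfl
  refine ⟨k + 1, ?_⟩
  have : ((ad K L u) ^ (k + 1)) v = ((ad K L u) ^ k) ⁅u, v⁆ := by
    rw [pow_succ]
    simp only [Module.End.mul_apply]
    rfl
  rw [this, key k, hk uN]
  simp


/-- Sum of all `(ad u)^t` images of a submodule. -/
noncomputable def adSweep (u : L) (S : Submodule K L) : Submodule K L :=
  ⨆ t : ℕ, S.map ((ad K L u) ^ t : Module.End K L)

lemma adSweep_le_self (u : L) (S : Submodule K L) : S ≤ adSweep u S := by
  have h0 : S.map ((ad K L u) ^ 0 : Module.End K L) = S := by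
    simp [pow_zero, Module.End.one_eq_id, Submodule.map_id]
  conv_lhs => rw [← h0]
  exact le_iSup (fun t : ℕ => S.map ((ad K L u) ^ t : Module.End K L)) 0

lemma adSweep_fg (u : L) {S : Submodule K L} (hS : S.FG)
    (h : ∀ v : L, ∃ n, ((ad K L u) ^ n) v = 0) : (adSweep u S).FG := by
  classical
  obtain ⟨F, rfl⟩ := hS
  choose n hn using h
  set N := (F.sup n) + 1 with hN_def
  have hkill : ∀ t, N ≤ t → ∀ v ∈ F, ((ad K L u) ^ t) v = 0 := by
    intro t ht v hv
    have hnv : n v ≤ t := le_trans (Nat.le_succ_of_le (Finset.le_sup hv)) ht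
    obtain ⟨m, rfl⟩ := Nat.exists_eq_add_of_le hnv
    rw [add_comm, pow_add, Module.End.mul_apply, hn v]
    simp
  have heq : adSweep u (Submodule.span K F) =
      (Finset.range N).sup (fun t => (Submodule.span K (F : Set L)).map
        ((ad K L u) ^ t : Module.End K L)) := by
    apply le_antisymm
    · refine iSup_le fun t => ?_
      by_cases ht : t < N
      · exact Finset.le_sup (f := fun t => (Submodule.span K (F : Set L)).map
          ((ad K L u) ^ t : Module.End K L)) (Finset.mem_range.2 ht)
      · push_neg at ht
        have : (Submodule.span K (F : Set L)).map ((ad K L u) ^ t : Module.End K L) = ⊥ := by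
          rw [Submodule.map_span, eq_bot_iff, Submodule.span_le]
          rintro _ ⟨v, hv, rfl⟩
          simp [hkill t ht v hv]
        rw [this]
        exact bot_le
    · exact Finset.sup_le fun t _ => le_iSup (fun t : ℕ =>
        (Submodule.span K (F : Set L)).map ((ad K L u) ^ t : Module.End K L)) t
  rw [heq]
  apply Submodule.fg_finset_sup
  intro t _
  exact Submodule.FG.map _ (Submodule.fg_span F.finite_toSet)

/-- The iterated ad-sweep along a list. -/
noncomputable def chainM : List L → L → Submodule K L
  | [], z => Submodule.span K {z}
  | u :: tl, z => adSweep u (chainM tl z)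

lemma chainM_self_mem (us : List L) (z : L) : z ∈ chainM (K := K) us z := by
  induction us with
  | nil => exact Submodule.mem_span_singleton_self z
  | cons u tl ih => exact adSweep_le_self u _ ih

lemma chainM_le_ideal (P : LieIdeal K L) {z : L} (hz : z ∈ P) (us : List L) :
    chainM (K := K) us z ≤ P.toSubmodule := by
  induction us with
  | nil => rwa [chainM, Submodule.span_singleton_le_iff_mem]
  | cons u tl ih =>
    refine iSup_le fun t => ?_
    induction t with
    | zero => simpa [pow_zero, Module.End.one_eq_id, Submodule.map_id] using ih
    | succ t iht =>
      rw [pow_succ']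
      intro x hx
      obtain ⟨y, hy, rfl⟩ := hx
      have : ((ad K L u) ^ t) y ∈ P := iht ⟨y, hy, rfl⟩
      exact P.lie_mem this

/-- Triangularity of a list: each element normalizes the span of its tail. -/
def Triang (K : Type*) {L : Type*} [Field K] [LieRing L] [LieAlgebra K L] : List L → Prop
  | [] => True
  | u :: tl => (∀ w ∈ Submodule.span K {x | x ∈ tl}, ⁅w, u⁆ ∈ Submodule.span K {x | x ∈ tl})
      ∧ Triang K tl

lemma chainM_lie_mem : ∀ us : List L, Triang K us → ∀ z : L,
    ∀ w ∈ Submodule.span K {x | x ∈ us}, ∀ m ∈ chainM (K := K) us z,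
      ⁅w, m⁆ ∈ chainM (K := K) us z := by
  intro us
  induction us with
  | nil =>
    intro _ z w hw m hm
    have : w = 0 := by
      simpa using hw
    simp [this]
  | cons u tl ih =>
    rintro ⟨htri, htl⟩ z w hw m hm
    set S' := chainM (K := K) tl z with hS'
    have adu_mem : ∀ m ∈ chainM (K := K) (u :: tl) z, ⁅u, m⁆ ∈ chainM (K := K) (u :: tl) z := by
      intro m hm
      refine Submodule.iSup_induction
        (motive := fun y => ⁅u, y⁆ ∈ chainM (K := K) (u :: tl) z)
        (fun t : ℕ => S'.map ((ad K L u) ^ t : Module.End K L)) hm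
        (fun t x hx => ?_) (by simp) (fun x y hx hy => ?_)
      · obtain ⟨y, hy, rfl⟩ := hx
        have h1 : ⁅u, ((ad K L u) ^ t) y⁆ = ((ad K L u) ^ (t + 1)) y := by
          rw [pow_succ']; rfl
        rw [h1]
        exact le_iSup (fun t : ℕ => S'.map ((ad K L u) ^ t : Module.End K L)) (t + 1)
          ⟨y, hy, rfl⟩
      · rw [lie_add]; exact Submodule.add_mem _ hx hy
    have key : ∀ t : ℕ, ∀ w' ∈ Submodule.span K {x | x ∈ tl}, ∀ s' ∈ S',
        ⁅w', ((ad K L u) ^ t) s'⁆ ∈ chainM (K := K) (u :: tl) z := by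
      intro t
      induction t with
      | zero =>
        intro w' hw' s' hs'
        simp only [pow_zero, Module.End.one_apply]
        exact adSweep_le_self u S' (ih htl z w' hw' s' hs')
      | succ t iht =>
        intro w' hw' s' hs'
        have hsplit : ⁅w', ((ad K L u) ^ (t + 1)) s'⁆ =
            ⁅⁅w', u⁆, ((ad K L u) ^ t) s'⁆ + ⁅u, ⁅w', ((ad K L u) ^ t) s'⁆⁆ := by
          have : ((ad K L u) ^ (t + 1)) s' = ⁅u, ((ad K L u) ^ t) s'⁆ := by
            rw [pow_succ']; rfl
          rw [this, leibniz_lie]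
        rw [hsplit]
        refine Submodule.add_mem _ ?_ ?_
        · exact iht ⁅w', u⁆ (htri w' hw') s' hs'
        · exact adu_mem _ (iht w' hw' s' hs')
    have hwspan : w ∈ Submodule.span K (insert u {x | x ∈ tl}) := by
      have : {x | x ∈ u :: tl} = insert u {x | x ∈ tl} := by
        ext x; simp
      rwa [this] at hw
    obtain ⟨c, w', hw', rfl⟩ := Submodule.mem_span_insert.1 hwspan
    rw [add_lie, smul_lie]
    refine Submodule.add_mem _ (Submodule.smul_mem _ _ (adu_mem m hm)) ?_
    refine Submodule.iSup_induction
      (motive := fun m => ⁅w', m⁆ ∈ chainM (K := K) (u :: tl) z)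
      (fun t : ℕ => S'.map ((ad K L u) ^ t : Module.End K L)) hm
      (fun t x hx => ?_) (by simp) (fun x y hx hy => ?_)
    · obtain ⟨y, hy, rfl⟩ := hx
      exact key t w' hw' y hy
    · rw [lie_add]; exact Submodule.add_mem _ hx hy


lemma bkSpan_finset_sup_left {ι : Type*} (s : Finset ι) (f : ι → Submodule K L)
    (T U : Submodule K L) (h : ∀ i ∈ s, bkSpan K (f i) T ≤ U) :
    bkSpan K (s.sup f) T ≤ U := by
  classical
  induction s using Finset.induction with
  | empty =>
    refine bkSpan.le_iff.2 fun a ha b hb => ?_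
    simp only [Finset.sup_empty, Submodule.mem_bot] at ha
    simp [ha]
  | insert a s hnotmem ih =>
    rw [Finset.sup_insert]
    refine le_trans bkSpan.sup_left (sup_le ?_ ?_)
    · exact h a (Finset.mem_insert_self a s)
    · exact ih fun i hi => h i (Finset.mem_insert_of_mem hi)

lemma bkSpan_finset_sup_right {ι : Type*} (s : Finset ι) (f : ι → Submodule K L)
    (T U : Submodule K L) (h : ∀ i ∈ s, bkSpan K T (f i) ≤ U) :
    bkSpan K T (s.sup f) ≤ U := by
  refine le_trans bkSpan.comm_le (bkSpan_finset_sup_left s f T U fun i hi => ?_)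
  exact le_trans bkSpan.comm_le (h i hi)

lemma fg_of_le_fg {P Q : Submodule K L} (h : P ≤ Q) (hQ : Q.FG) : P.FG := by
  haveI : IsNoetherian K ↥Q := isNoetherian_of_fg_of_noetherian Q hQ
  have h1 : (P.comap Q.subtype).FG := IsNoetherian.noetherian _
  have h2 : (P.comap Q.subtype).map Q.subtype = P := by
    rw [Submodule.map_comap_eq, Submodule.range_subtype]
    exact inf_eq_right.2 h
  exact h2 ▸ h1.map _

/-- A finitely generated nilpotent Lie subalgebra is finitely generated as a submodule. -/
lemma lieSpan_fg_of_nilpotent (T : Finset L)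
    (hnil : LieRing.IsNilpotent ↥(LieSubalgebra.lieSpan K L (T : Set L))) :
    (LieSubalgebra.lieSpan K L (T : Set L)).toSubmodule.FG := by
  classical
  set P := LieSubalgebra.lieSpan K L (T : Set L) with hP
  obtain ⟨c, hc⟩ := (isNilpotent_iff_extLcs P).1 hnil
  -- words of weight n+1
  set W : ℕ → Submodule K L := fun n =>
    Nat.rec (Submodule.span K (T : Set L)) (fun _ prev => bkSpan K (Submodule.span K (T : Set L)) prev) n
    with hW
  have hW0 : W 0 = Submodule.span K (T : Set L) := rfl
  have hWsucc : ∀ n, W (n + 1) = bkSpan K (Submodule.span K (T : Set L)) (W n) := fun n => rfl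
  have hWfg : ∀ n, (W n).FG := by
    intro n
    induction n with
    | zero => exact Submodule.fg_span T.finite_toSet
    | succ n ih => exact bkSpan.fg (Submodule.fg_span T.finite_toSet) ih
  have hWle : ∀ n, W n ≤ extLcs P n := by
    intro n
    induction n with
    | zero => exact LieSubalgebra.submodule_span_le_lieSpan
    | succ n ih =>
      rw [hWsucc]
      exact bkSpan.mono LieSubalgebra.submodule_span_le_lieSpan ih
  have hanti : ∀ m n, m ≤ n → extLcs P n ≤ extLcs P m :=
    fun m n h => antitone_nat_of_succ_le (extLcs_succ_le P) h
  have hbk : ∀ s t, bkSpan K (W s) (W t) ≤ W (s + t + 1) := by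
    intro s
    induction s with
    | zero =>
      intro t
      rw [show (0 + t + 1) = t + 1 from by omega, hWsucc t, hW0]
    | succ s ih =>
      intro t
      refine bkSpan.le_iff.2 fun a ha b hb => ?_
      rw [hWsucc s] at ha
      rw [bkSpan] at ha
      induction ha using Submodule.span_induction with
      | mem m hm =>
        obtain ⟨x, hx, y, hy, rfl⟩ := hm
        have hJac : ⁅⁅x, y⁆, b⁆ = ⁅x, ⁅y, b⁆⁆ - ⁅y, ⁅x, b⁆⁆ := by
          rw [leibniz_lie x y b]; abel
        rw [hJac]
        refine Submodule.sub_mem _ ?_ ?_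
        · have h1 : ⁅y, b⁆ ∈ W (s + t + 1) := ih t (bkSpan.lie_mem hy hb)
          have h2 : ⁅x, ⁅y, b⁆⁆ ∈ W (s + t + 1 + 1) :=
            bkSpan.lie_mem hx h1
          rwa [show s + 1 + t + 1 = s + t + 1 + 1 from by omega]
        · have h1 : ⁅x, b⁆ ∈ W (t + 1) := by
            rw [hWsucc]
            exact bkSpan.lie_mem hx hb
          have h2 : ⁅y, ⁅x, b⁆⁆ ∈ W (s + (t + 1) + 1) := ih (t + 1) (bkSpan.lie_mem hy h1)
          rwa [show s + (t + 1) + 1 = s + 1 + t + 1 from by omega] at h2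
      | zero => simp
      | add x y hx hy h1 h2 => rw [add_lie]; exact Submodule.add_mem _ h1 h2
      | smul r x hx h1 => rw [smul_lie]; exact Submodule.smul_mem _ _ h1
  set Q : Submodule K L := (Finset.range (c + 1)).sup W with hQ
  have hQfg : Q.FG := Submodule.fg_finset_sup _ _ fun i _ => hWfg i
  have hQclosed : ∀ a ∈ Q, ∀ b ∈ Q, ⁅a, b⁆ ∈ Q := by
    have : bkSpan K Q Q ≤ Q := by
      refine bkSpan_finset_sup_left _ _ _ _ fun i _ => ?_
      refine bkSpan_finset_sup_right _ _ _ _ fun j _ => ?_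
      refine le_trans (hbk i j) ?_
      by_cases hij : i + j + 1 < c + 1
      · exact Finset.le_sup (f := W) (Finset.mem_range.2 hij)
      · push_neg at hij
        have hcle : extLcs P (i + j + 1) ≤ ⊥ :=
          le_trans (hanti c (i + j + 1) (by omega)) hc.le
        exact le_trans (le_trans (hWle (i + j + 1)) hcle) bot_le
    exact fun a ha b hb => this (bkSpan.lie_mem ha hb)
  set Qalg : LieSubalgebra K L := { Q with lie_mem' := fun {x y} hx hy => hQclosed x hx y hy }
  have hPQ : P ≤ Qalg := by
    rw [hP, LieSubalgebra.lieSpan_le]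
    intro x hx
    have : x ∈ W 0 := Submodule.subset_span hx
    exact Finset.le_sup (f := W) (Finset.mem_range.2 (Nat.succ_pos c)) this
  exact fg_of_le_fg hPQ hQfg


/-- Relative lower central series: iterate `bkSpan A`. -/
def relLcs (A : Submodule K L) (S : Submodule K L) : ℕ → Submodule K L
  | 0 => S
  | n + 1 => bkSpan K A (relLcs A S n)

lemma relLcs_le_extLcs (A : Submodule K L) (P : LieSubalgebra K L) (hAP : A ≤ P.toSubmodule) :
    ∀ n, relLcs A A n ≤ extLcs P n
  | 0 => hAP
  | n + 1 => bkSpan.mono hAP (relLcs_le_extLcs A P hAP n)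

/-- External Fitting lemma: a Lie subalgebra which is the sum of two externally nilpotent
ideals is externally nilpotent. -/
lemma fitting (H : LieSubalgebra K L) (A B : Submodule K L)
    (hA : A ≤ H.toSubmodule) (hB : B ≤ H.toSubmodule) (hAB : A ⊔ B = H.toSubmodule)
    (hAid : ∀ h ∈ H, ∀ a ∈ A, ⁅h, a⁆ ∈ A)
    (hBid : ∀ h ∈ H, ∀ b ∈ B, ⁅h, b⁆ ∈ B)
    (hAn : ∃ p, relLcs A A p = ⊥) (hBn : ∃ q, relLcs B B q = ⊥) :
    ∃ n, extLcs H n = ⊥ := by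
  classical
  obtain ⟨p, hp⟩ := hAn
  obtain ⟨q, hq⟩ := hBn
  -- relative series starting at H
  set Ab : ℕ → Submodule K L := relLcs A H.toSubmodule with hAb
  set Bb : ℕ → Submodule K L := relLcs B H.toSubmodule with hBb
  have hAb0 : Ab 0 = H.toSubmodule := rfl
  have hAbsucc : ∀ i, Ab (i + 1) = bkSpan K A (Ab i) := fun i => rfl
  have hBb0 : Bb 0 = H.toSubmodule := rfl
  have hBbsucc : ∀ i, Bb (i + 1) = bkSpan K B (Bb i) := fun i => rfl
  have hAbH : ∀ i, Ab i ≤ H.toSubmodule := by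
    intro i
    induction i with
    | zero => exact le_rfl
    | succ i ih => exact bkSpan.le_iff.2 fun a ha m hm => H.lie_mem (hA ha) (ih hm)
  have hBbH : ∀ i, Bb i ≤ H.toSubmodule := by
    intro i
    induction i with
    | zero => exact le_rfl
    | succ i ih => exact bkSpan.le_iff.2 fun a ha m hm => H.lie_mem (hB ha) (ih hm)
  have hAbbot : ∀ i, p + 1 ≤ i → Ab i = ⊥ := by
    have key : ∀ i, Ab (i + 1) ≤ relLcs A A i := by
      intro i
      induction i with
      | zero =>
        refine bkSpan.le_iff.2 fun a ha m hm => ?_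
        have : ⁅(⟨m, hm⟩ : H).val, a⁆ ∈ A := hAid m hm a ha
        have h2 : -⁅m, a⁆ ∈ A := neg_mem this
        simpa only [lie_skew, relLcs] using h2
      | succ i ih => exact bkSpan.mono le_rfl ih
    have hmono : ∀ i j, i ≤ j → Ab j ≤ Ab i := by
      have hsucc : ∀ i, Ab (i + 1) ≤ Ab i := by
        intro i
        induction i with
        | zero => exact hAbH 1
        | succ i ih => exact bkSpan.mono le_rfl ih
      exact fun i j h => antitone_nat_of_succ_le hsucc h
    intro i hi
    have h1 : Ab i ≤ Ab (p + 1) := hmono _ _ hi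
    have h2 : Ab (p + 1) ≤ relLcs A A p := key p
    rw [hp] at h2
    exact le_bot_iff.1 (le_trans h1 h2)
  have hBbbot : ∀ i, q + 1 ≤ i → Bb i = ⊥ := by
    have key : ∀ i, Bb (i + 1) ≤ relLcs B B i := by
      intro i
      induction i with
      | zero =>
        refine bkSpan.le_iff.2 fun a ha m hm => ?_
        have : ⁅m, a⁆ ∈ B := hBid m hm a ha
        have h2 : -⁅m, a⁆ ∈ B := neg_mem this
        simpa only [lie_skew, relLcs] using h2
      | succ i ih => exact bkSpan.mono le_rfl ih
    have hmono : ∀ i j, i ≤ j → Bb j ≤ Bb i := by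
      have hsucc : ∀ i, Bb (i + 1) ≤ Bb i := by
        intro i
        induction i with
        | zero => exact hBbH 1
        | succ i ih => exact bkSpan.mono le_rfl ih
      exact fun i j h => antitone_nat_of_succ_le hsucc h
    intro i hi
    have h1 : Bb i ≤ Bb (q + 1) := hmono _ _ hi
    have h2 : Bb (q + 1) ≤ relLcs B B q := key q
    rw [hq] at h2
    exact le_bot_iff.1 (le_trans h1 h2)
  -- Ab i and Bb i are ideals of H
  have hAbideal : ∀ i, ∀ h ∈ H, ∀ m ∈ Ab i, ⁅h, m⁆ ∈ Ab i := by
    intro i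
    induction i with
    | zero => exact fun h hh m hm => H.lie_mem hh hm
    | succ i ih =>
      intro h hh m hm
      rw [hAbsucc] at hm ⊢
      rw [bkSpan] at hm
      induction hm using Submodule.span_induction with
      | mem w hw =>
        obtain ⟨a, ha, v, hv, rfl⟩ := hw
        have hJac : ⁅h, ⁅a, v⁆⁆ = ⁅⁅h, a⁆, v⁆ + ⁅a, ⁅h, v⁆⁆ := leibniz_lie h a v
        rw [hJac]
        exact Submodule.add_mem _
          (bkSpan.lie_mem (hAid h hh a ha) hv)
          (bkSpan.lie_mem ha (ih h hh v hv))
      | zero => simp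
      | add x y hx hy h1 h2 => rw [lie_add]; exact Submodule.add_mem _ h1 h2
      | smul c x hx h1 => rw [lie_smul]; exact Submodule.smul_mem _ _ h1
  have hBbideal : ∀ i, ∀ h ∈ H, ∀ m ∈ Bb i, ⁅h, m⁆ ∈ Bb i := by
    intro i
    induction i with
    | zero => exact fun h hh m hm => H.lie_mem hh hm
    | succ i ih =>
      intro h hh m hm
      rw [hBbsucc] at hm ⊢
      rw [bkSpan] at hm
      induction hm using Submodule.span_induction with
      | mem w hw =>
        obtain ⟨a, ha, v, hv, rfl⟩ := hw
        have hJac : ⁅h, ⁅a, v⁆⁆ = ⁅⁅h, a⁆, v⁆ + ⁅a, ⁅h, v⁆⁆ := leibniz_lie h a v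
        rw [hJac]
        exact Submodule.add_mem _
          (bkSpan.lie_mem (hBid h hh a ha) hv)
          (bkSpan.lie_mem ha (ih h hh v hv))
      | zero => simp
      | add x y hx hy h1 h2 => rw [lie_add]; exact Submodule.add_mem _ h1 h2
      | smul c x hx h1 => rw [lie_smul]; exact Submodule.smul_mem _ _ h1
  -- main induction
  have main : ∀ n, extLcs H n ≤
      (Finset.range (n + 1)).sup (fun i => Ab i ⊓ Bb (n - i)) := by
    intro n
    induction n with
    | zero =>
      refine le_trans ?_ (Finset.le_sup (f := fun i => Ab i ⊓ Bb (0 - i))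
        (Finset.mem_range.2 Nat.one_pos))
      show extLcs H 0 ≤ Ab 0 ⊓ Bb (0 - 0)
      rw [hAb0, hBb0]
      exact le_inf le_rfl le_rfl
    | succ n ih =>
      show bkSpan K H.toSubmodule (extLcs H n) ≤ _
      rw [← hAB]
      refine le_trans (bkSpan.mono le_rfl ih) ?_
      refine le_trans bkSpan.sup_left (sup_le ?_ ?_)
      · refine bkSpan_finset_sup_right _ _ _ _ fun i hi => ?_
        have h1 : bkSpan K A (Ab i ⊓ Bb (n - i)) ≤ Ab (i + 1) ⊓ Bb (n + 1 - (i + 1)) := by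
          refine le_inf ?_ ?_
          · exact le_trans (bkSpan.mono le_rfl inf_le_left) (le_of_eq (hAbsucc i).symm)
          · refine bkSpan.le_iff.2 fun a ha m hm => ?_
            have : n + 1 - (i + 1) = n - i := by omega
            rw [this]
            exact hBbideal (n - i) a (hA ha) m hm.2
        refine le_trans h1 ?_
        refine Finset.le_sup (f := fun i => Ab i ⊓ Bb (n + 1 - i)) ?_
        rw [Finset.mem_range] at hi ⊢
        omega
      · refine bkSpan_finset_sup_right _ _ _ _ fun i hi => ?_
        have h1 : bkSpan K B (Ab i ⊓ Bb (n - i)) ≤ Ab i ⊓ Bb (n - i + 1) := by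
          refine le_inf ?_ ?_
          · refine bkSpan.le_iff.2 fun a ha m hm => ?_
            exact hAbideal i a (hB ha) m hm.1
          · exact le_trans (bkSpan.mono le_rfl inf_le_right) (le_of_eq (hBbsucc (n - i)).symm)
        refine le_trans h1 ?_
        rw [Finset.mem_range] at hi
        by_cases hin : i ≤ n
        · have : n - i + 1 = n + 1 - i := by omega
          rw [this]
          exact Finset.le_sup (f := fun i => Ab i ⊓ Bb (n + 1 - i))
            (Finset.mem_range.2 (by omega))
        · omega
  refine ⟨p + q + 2, ?_⟩
  rw [eq_bot_iff]
  refine le_trans (main (p + q + 2)) ?_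
  refine Finset.sup_le fun i hi => ?_
  rw [Finset.mem_range] at hi
  by_cases hip : p + 1 ≤ i
  · rw [hAbbot i hip]
    exact le_trans inf_le_left bot_le
  · have : q + 1 ≤ p + q + 2 - i := by omega
    rw [hBbbot _ this]
    exact le_trans inf_le_right bot_le


lemma lie_mem_left_ideal (P : LieIdeal K L) {a : L} (ha : a ∈ P) (x : L) : ⁅a, x⁆ ∈ P := by
  have h2 : -⁅x, a⁆ ∈ P := neg_mem (P.lie_mem ha)
  simpa only [lie_skew] using h2

section TwoIdeals

variable (I J : LieIdeal K L)

lemma sum_closed (G : Finset L) (hG : (G : Set L) ⊆ (I : Set L) ∪ (J : Set L)) :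
    (LieSubalgebra.lieSpan K L (G : Set L)).toSubmodule ⊓ LieSubmodule.toSubmodule I ⊔
      (LieSubalgebra.lieSpan K L (G : Set L)).toSubmodule ⊓ LieSubmodule.toSubmodule J =
      (LieSubalgebra.lieSpan K L (G : Set L)).toSubmodule := by
  set H := LieSubalgebra.lieSpan K L (G : Set L) with hH
  set S : Submodule K L := H.toSubmodule ⊓ LieSubmodule.toSubmodule I ⊔
    H.toSubmodule ⊓ LieSubmodule.toSubmodule J with hS
  refine le_antisymm (sup_le inf_le_left inf_le_left) ?_
  have hclosed : ∀ x ∈ S, ∀ y ∈ S, ⁅x, y⁆ ∈ S := by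
    intro x hx y hy
    obtain ⟨a, ha, b, hb, rfl⟩ := Submodule.mem_sup.1 hx
    obtain ⟨a', ha', b', hb', rfl⟩ := Submodule.mem_sup.1 hy
    rw [add_lie, lie_add, lie_add]
    refine Submodule.add_mem _ (Submodule.add_mem _ ?_ ?_) (Submodule.add_mem _ ?_ ?_)
    · exact Submodule.mem_sup_left
        ⟨H.lie_mem ha.1 ha'.1, lie_mem_left_ideal I ha.2 a'⟩
    · exact Submodule.mem_sup_left
        ⟨H.lie_mem ha.1 hb'.1, lie_mem_left_ideal I ha.2 b'⟩
    · exact Submodule.mem_sup_right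
        ⟨H.lie_mem hb.1 ha'.1, lie_mem_left_ideal J hb.2 a'⟩
    · exact Submodule.mem_sup_right
        ⟨H.lie_mem hb.1 hb'.1, lie_mem_left_ideal J hb.2 b'⟩
  set Salg : LieSubalgebra K L := { S with lie_mem' := fun {x y} hx hy => hclosed x hx y hy }
  have hHS : H ≤ Salg := by
    rw [hH, LieSubalgebra.lieSpan_le]
    intro g hg
    have hgH : g ∈ H := LieSubalgebra.subset_lieSpan hg
    rcases hG hg with hgI | hgJ
    · exact Submodule.mem_sup_left ⟨hgH, hgI⟩
    · exact Submodule.mem_sup_right ⟨hgH, hgJ⟩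
  exact fun x hx => hHS hx

lemma extNilpotent_of_fg (hI : LieSetLocallyNilpotent K (I : Set L))
    (hJ : LieSetLocallyNilpotent K (J : Set L)) (G : Finset L)
    (hG : (G : Set L) ⊆ (I : Set L) ∪ (J : Set L))
    (hfg : (LieSubalgebra.lieSpan K L (G : Set L)).toSubmodule.FG) :
    ∃ n, extLcs (LieSubalgebra.lieSpan K L (G : Set L)) n = ⊥ := by
  classical
  set H := LieSubalgebra.lieSpan K L (G : Set L) with hH
  set A : Submodule K L := H.toSubmodule ⊓ LieSubmodule.toSubmodule I with hA
  set B : Submodule K L := H.toSubmodule ⊓ LieSubmodule.toSubmodule J with hB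
  have relNil : ∀ (P : LieIdeal K L), LieSetLocallyNilpotent K (P : Set L) →
      ∀ C : Submodule K L, C.FG → C ≤ LieSubmodule.toSubmodule P →
      ∃ p, relLcs C C p = ⊥ := by
    intro P hP C hCfg hCP
    obtain ⟨F, hF⟩ := hCfg
    have hFC : (F : Set L) ⊆ C := by
      intro v hv
      rw [← hF]
      exact Submodule.subset_span hv
    have hFP : (F : Set L) ⊆ (P : Set L) := fun v hv => hCP (hFC hv)
    have hnil := hP F hFP
    obtain ⟨c, hc⟩ := (isNilpotent_iff_extLcs _).1 hnil
    refine ⟨c, ?_⟩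
    have hle : C ≤ (LieSubalgebra.lieSpan K L (F : Set L)).toSubmodule := by
      rw [← hF]
      exact LieSubalgebra.submodule_span_le_lieSpan
    exact le_bot_iff.1 (le_trans (relLcs_le_extLcs C _ hle c) hc.le)
  refine fitting H A B inf_le_left inf_le_left (sum_closed I J G hG)
    (fun h hh a ha => ⟨H.lie_mem hh ha.1, I.lie_mem ha.2⟩)
    (fun h hh b hb => ⟨H.lie_mem hh hb.1, J.lie_mem hb.2⟩)
    (relNil I hI A (fg_of_le_fg inf_le_left hfg) inf_le_right)
    (relNil J hJ B (fg_of_le_fg inf_le_left hfg) inf_le_right)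


lemma extLcs_decomp (G : Finset L) (hG : (G : Set L) ⊆ (I : Set L) ∪ (J : Set L)) :
    ∀ i, extLcs (LieSubalgebra.lieSpan K L (G : Set L)) i ≤
      (extLcs (LieSubalgebra.lieSpan K L (G : Set L)) i ⊓ LieSubmodule.toSubmodule I) ⊔
      (extLcs (LieSubalgebra.lieSpan K L (G : Set L)) i ⊓ LieSubmodule.toSubmodule J) := by
  set H := LieSubalgebra.lieSpan K L (G : Set L) with hH
  intro i
  induction i with
  | zero => exact (sum_closed I J G hG).ge
  | succ i ih =>
    show bkSpan K H.toSubmodule (extLcs H i) ≤ _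
    refine le_trans (bkSpan.mono le_rfl ih) ?_
    refine le_trans bkSpan.sup_right (sup_le ?_ ?_)
    · refine le_trans ?_ le_sup_left
      refine bkSpan.le_iff.2 fun h hh m hm => ?_
      exact ⟨bkSpan.lie_mem hh hm.1, I.lie_mem hm.2⟩
    · refine le_trans ?_ le_sup_right
      refine bkSpan.le_iff.2 fun h hh m hm => ?_
      exact ⟨bkSpan.lie_mem hh hm.1, J.lie_mem hm.2⟩

lemma triang_append (l us' : List L) (htri' : Triang K us')
    (hcond : ∀ v ∈ l, ∀ w ∈ Submodule.span K {x | x ∈ l ++ us'},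
      ⁅w, v⁆ ∈ Submodule.span K {x | x ∈ us'}) :
    Triang K (l ++ us') := by
  induction l with
  | nil => simpa using htri'
  | cons v l ih =>
    have hsub1 : Submodule.span K {x | x ∈ l ++ us'} ≤
        Submodule.span K {x | x ∈ (v :: l) ++ us'} := by
      refine Submodule.span_mono fun x hx => ?_
      simp only [Set.mem_setOf_eq, List.mem_append, List.mem_cons] at hx ⊢
      tauto
    have hsub2 : Submodule.span K {x | x ∈ us'} ≤
        Submodule.span K {x | x ∈ l ++ us'} := by
      refine Submodule.span_mono fun x hx => ?_
      simp only [Set.mem_setOf_eq, List.mem_append] at hx ⊢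
      tauto
    refine ⟨?_, ?_⟩
    · intro w hw
      exact hsub2 (hcond v (List.mem_cons_self) w (hsub1 hw))
    · exact ih fun v' hv' w hw => hcond v' (List.mem_cons_of_mem v hv') w (hsub1 hw)

lemma exists_triang (G : Finset L) (hG : (G : Set L) ⊆ (I : Set L) ∪ (J : Set L))
    (hfg : (LieSubalgebra.lieSpan K L (G : Set L)).toSubmodule.FG)
    (hnil : ∃ n, extLcs (LieSubalgebra.lieSpan K L (G : Set L)) n = ⊥) :
    ∃ us : List L, (∀ u ∈ us, u ∈ (I : Set L) ∪ (J : Set L)) ∧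
      Submodule.span K {x | x ∈ us} = (LieSubalgebra.lieSpan K L (G : Set L)).toSubmodule ∧
      Triang K us := by
  classical
  set H := LieSubalgebra.lieSpan K L (G : Set L) with hH
  obtain ⟨n, hn⟩ := hnil
  have key : ∀ d : ℕ, ∃ us : List L, (∀ u ∈ us, u ∈ (I : Set L) ∪ (J : Set L)) ∧
      Submodule.span K {x | x ∈ us} = extLcs H (n - d) ∧ Triang K us := by
    intro d
    induction d with
    | zero =>
      refine ⟨[], by simp, ?_, trivial⟩
      have : {x : L | x ∈ ([] : List L)} = (∅ : Set L) := by ext x; simp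
      rw [this, Submodule.span_empty, Nat.sub_zero, hn]
    | succ d ih =>
      obtain ⟨us', hmem', hspan', htri'⟩ := ih
      by_cases hnd : n ≤ d
      · have : n - (d + 1) = n - d := by omega
        rw [this]
        exact ⟨us', hmem', hspan', htri'⟩
      · set k := n - (d + 1) with hk
        have hk1 : k + 1 = n - d := by omega
        -- layer spanning sets
        have hfgI : (extLcs H k ⊓ LieSubmodule.toSubmodule I).FG :=
          fg_of_le_fg (le_trans inf_le_left (extLcs_le H k)) hfg
        have hfgJ : (extLcs H k ⊓ LieSubmodule.toSubmodule J).FG :=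
          fg_of_le_fg (le_trans inf_le_left (extLcs_le H k)) hfg
        obtain ⟨F1, hF1⟩ := hfgI
        obtain ⟨F2, hF2⟩ := hfgJ
        have hF1sub : (F1 : Set L) ⊆ (extLcs H k ⊓ LieSubmodule.toSubmodule I : Submodule K L) := by
          intro v hv; rw [← hF1]; exact Submodule.subset_span hv
        have hF2sub : (F2 : Set L) ⊆ (extLcs H k ⊓ LieSubmodule.toSubmodule J : Submodule K L) := by
          intro v hv; rw [← hF2]; exact Submodule.subset_span hv
        set l : List L := F1.toList ++ F2.toList with hl
        set us : List L := l ++ us' with hus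
        have husset : {x : L | x ∈ us} = (F1 : Set L) ∪ ((F2 : Set L) ∪ {x | x ∈ us'}) := by
          ext x
          simp only [hus, hl, Set.mem_setOf_eq, List.mem_append, Finset.mem_toList,
            Set.mem_union, Finset.mem_coe, Set.mem_setOf_eq]
          tauto
        have hspan : Submodule.span K {x | x ∈ us} = extLcs H k := by
          rw [husset, Submodule.span_union, Submodule.span_union, hF1, hF2, hspan', ← hk1]
          apply le_antisymm
          · exact sup_le inf_le_left (sup_le inf_le_left (extLcs_succ_le H k))
          · refine le_trans (extLcs_decomp I J G hG k) ?_
            exact sup_le le_sup_left (le_trans le_sup_left le_sup_right)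
        refine ⟨us, ?_, hspan, ?_⟩
        · intro u hu
          rw [hus, hl] at hu
          simp only [List.mem_append, Finset.mem_toList] at hu
          rcases hu with (hu | hu) | hu
          · exact Or.inl (hF1sub hu).2
          · exact Or.inr (hF2sub hu).2
          · exact hmem' u hu
        · refine triang_append l us' htri' fun v hv w hw => ?_
          have hvEk : v ∈ extLcs H k := by
            rw [hl] at hv
            simp only [List.mem_append, Finset.mem_toList] at hv
            rcases hv with hv | hv
            · exact (hF1sub hv).1
            · exact (hF2sub hv).1
          have hwH : w ∈ H.toSubmodule := by
            rw [← hus] at hw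
            rw [hspan] at hw
            exact extLcs_le H k hw
          rw [hspan', ← hk1]
          exact bkSpan.lie_mem hwH hvEk
  obtain ⟨us, hmem, hspan, htri⟩ := key n
  rw [Nat.sub_self] at hspan
  exact ⟨us, hmem, hspan, htri⟩


lemma chainM_fg (hI : LieSetLocallyNilpotent K (I : Set L))
    (hJ : LieSetLocallyNilpotent K (J : Set L)) (us : List L)
    (hmem : ∀ u ∈ us, u ∈ (I : Set L) ∪ (J : Set L)) (z : L) :
    (chainM (K := K) us z).FG := by
  induction us with
  | nil => exact Submodule.fg_span (Set.finite_singleton z)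
  | cons u tl ih =>
    have hu := hmem u (List.mem_cons_self)
    have hnilpt : ∀ v : L, ∃ n, ((ad K L u) ^ n) v = 0 := by
      rcases hu with h | h
      · exact fun v => lemE (I := I) hI h v
      · exact fun v => lemE (I := J) hJ h v
    exact adSweep_fg u (ih fun u' hu' => hmem u' (List.mem_cons_of_mem u hu')) hnilpt

lemma step_fg (hI : LieSetLocallyNilpotent K (I : Set L))
    (hJ : LieSetLocallyNilpotent K (J : Set L)) (G : Finset L)
    (hG : (G : Set L) ⊆ (I : Set L) ∪ (J : Set L))
    (hfg : (LieSubalgebra.lieSpan K L (G : Set L)).toSubmodule.FG)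
    (y : L) (hy : y ∈ (I : Set L) ∪ (J : Set L)) :
    (LieSubalgebra.lieSpan K L (insert y (G : Set L))).toSubmodule.FG := by
  classical
  set H := LieSubalgebra.lieSpan K L (G : Set L) with hH
  obtain ⟨us, hmem, hspan, htri⟩ := exists_triang I J G hG hfg
    (extNilpotent_of_fg I J hI hJ G hG hfg)
  set M : Submodule K L := chainM (K := K) us y with hM
  have hMfg : M.FG := chainM_fg I J hI hJ us hmem y
  have hMinv : ∀ h ∈ H.toSubmodule, ∀ m ∈ M, ⁅h, m⁆ ∈ M := by
    intro h hh m hm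
    exact chainM_lie_mem us htri y h (hspan ▸ hh) m hm
  have hyM : y ∈ M := chainM_self_mem us y
  -- the Lie span of M is finite dimensional, contained in the relevant ideal,
  -- and still ad-H-invariant
  have key : ∀ P : LieIdeal K L, LieSetLocallyNilpotent K (P : Set L) → y ∈ P →
      ∃ N : LieSubalgebra K L, N.toSubmodule.FG ∧ M ≤ N.toSubmodule ∧
        (∀ h ∈ H.toSubmodule, ∀ x ∈ N.toSubmodule, ⁅h, x⁆ ∈ N.toSubmodule) := by
    intro P hP hyP
    have hMP : M ≤ LieSubmodule.toSubmodule P := chainM_le_ideal P hyP us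
    obtain ⟨FM, hFM⟩ := hMfg
    have hFMM : (FM : Set L) ⊆ (M : Set L) := by
      intro v hv; rw [← hFM]; exact Submodule.subset_span hv
    have hFMP : (FM : Set L) ⊆ (P : Set L) := fun v hv => hMP (hFMM hv)
    set N := LieSubalgebra.lieSpan K L (FM : Set L) with hN
    have hNfg : N.toSubmodule.FG := lieSpan_fg_of_nilpotent FM (hP FM hFMP)
    have hMN : M ≤ N.toSubmodule := by
      rw [← hFM]; exact LieSubalgebra.submodule_span_le_lieSpan
    refine ⟨N, hNfg, hMN, ?_⟩
    intro h hh
    set Sh : Submodule K L := N.toSubmodule ⊓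
      Submodule.comap ((ad K L h : Module.End K L) : L →ₗ[K] L) N.toSubmodule with hSh
    have hShclosed : ∀ x ∈ Sh, ∀ z ∈ Sh, ⁅x, z⁆ ∈ Sh := by
      intro x hx z hz
      refine ⟨N.lie_mem hx.1 hz.1, ?_⟩
      have hmm : ⁅h, ⁅x, z⁆⁆ = ⁅⁅h, x⁆, z⁆ + ⁅x, ⁅h, z⁆⁆ := leibniz_lie h x z
      show (ad K L h) ⁅x, z⁆ ∈ N.toSubmodule
      rw [ad_apply, hmm]
      have hx2 : ⁅h, x⁆ ∈ N.toSubmodule := hx.2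
      have hz2 : ⁅h, z⁆ ∈ N.toSubmodule := hz.2
      exact Submodule.add_mem _ (N.lie_mem hx2 hz.1) (N.lie_mem hx.1 hz2)
    set Shalg : LieSubalgebra K L :=
      { Sh with lie_mem' := fun {x z} hx hz => hShclosed x hx z hz }
    have hNSh : N ≤ Shalg := by
      rw [hN, LieSubalgebra.lieSpan_le]
      intro v hv
      refine ⟨LieSubalgebra.subset_lieSpan hv, ?_⟩
      show (ad K L h) v ∈ N.toSubmodule
      rw [ad_apply]
      exact hMN (hMinv h hh v (hFMM hv))
    exact fun x hx => (hNSh hx).2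
  have main : ∀ P : LieIdeal K L, LieSetLocallyNilpotent K (P : Set L) → y ∈ P →
      (LieSubalgebra.lieSpan K L (insert y (G : Set L))).toSubmodule.FG := by
    intro P hP hyP
    obtain ⟨N, hNfg, hMN, hNinv⟩ := key P hP hyP
    set S : Submodule K L := H.toSubmodule ⊔ N.toSubmodule with hSdef
    have hSclosed : ∀ x ∈ S, ∀ z ∈ S, ⁅x, z⁆ ∈ S := by
      intro x hx z hz
      obtain ⟨a, ha, b, hb, rfl⟩ := Submodule.mem_sup.1 hx
      obtain ⟨a', ha', b', hb', rfl⟩ := Submodule.mem_sup.1 hz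
      rw [add_lie, lie_add, lie_add]
      refine Submodule.add_mem _ (Submodule.add_mem _ ?_ ?_) (Submodule.add_mem _ ?_ ?_)
      · exact Submodule.mem_sup_left (H.lie_mem ha ha')
      · exact Submodule.mem_sup_right (hNinv a ha b' hb')
      · have : ⁅a', b⁆ ∈ N.toSubmodule := hNinv a' ha' b hb
        have h2 : -⁅a', b⁆ ∈ N.toSubmodule := neg_mem this
        rw [lie_skew] at h2
        exact Submodule.mem_sup_right h2
      · exact Submodule.mem_sup_right (N.lie_mem hb hb')
    set Salg : LieSubalgebra K L :=
      { S with lie_mem' := fun {x z} hx hz => hSclosed x hx z hz }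
    have hle : LieSubalgebra.lieSpan K L (insert y (G : Set L)) ≤ Salg := by
      rw [LieSubalgebra.lieSpan_le]
      intro g hg
      rcases Set.mem_insert_iff.1 hg with rfl | hgG
      · exact Submodule.mem_sup_right (hMN hyM)
      · exact Submodule.mem_sup_left (LieSubalgebra.subset_lieSpan hgG)
    exact fg_of_le_fg (fun x hx => hle hx) (Submodule.FG.sup hfg hNfg)
  rcases hy with hyI | hyJ
  · exact main I hI hyI
  · exact main J hJ hyJ

lemma main_fg (hI : LieSetLocallyNilpotent K (I : Set L))
    (hJ : LieSetLocallyNilpotent K (J : Set L)) :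
    ∀ G : Finset L, (G : Set L) ⊆ (I : Set L) ∪ (J : Set L) →
      (LieSubalgebra.lieSpan K L (G : Set L)).toSubmodule.FG := by
  classical
  intro G
  induction G using Finset.induction with
  | empty =>
    intro _
    rw [Finset.coe_empty, LieSubalgebra.span_empty]
    exact Submodule.fg_bot
  | insert y G hyG ih =>
    intro hsub
    rw [Finset.coe_insert] at hsub ⊢
    have hG : (G : Set L) ⊆ (I : Set L) ∪ (J : Set L) :=
      fun g hg => hsub (Set.mem_insert_of_mem y hg)
    exact step_fg I J hI hJ G hG (ih hG) y (hsub (Set.mem_insert y _))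

end TwoIdeals

end Ideals

end Hartley

theorem sup_locallyNilpotent_lie_ideal {K L : Type*} [Field K] [LieRing L] [LieAlgebra K L]
    (I J : LieIdeal K L)
    (hI : LieSetLocallyNilpotent K (I : Set L)) (hJ : LieSetLocallyNilpotent K (J : Set L)) :
    LieSetLocallyNilpotent K ((I ⊔ J : LieIdeal K L) : Set L) := by
  classical
  intro s hs
  have hex : ∀ s : Finset L, ((s : Set L) ⊆ ((I ⊔ J : LieIdeal K L) : Set L)) →
      ∃ G : Finset L, (G : Set L) ⊆ (I : Set L) ∪ (J : Set L) ∧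
        ∀ z ∈ s, z ∈ LieSubalgebra.lieSpan K L (G : Set L) := by
    intro s
    induction s using Finset.induction with
    | empty => exact fun _ => ⟨∅, by simp, by simp⟩
    | insert z s hzs ih =>
      intro hsub
      have hs' : (s : Set L) ⊆ ((I ⊔ J : LieIdeal K L) : Set L) := by
        intro w hw
        exact hsub (by rw [Finset.coe_insert]; exact Set.mem_insert_of_mem z hw)
      obtain ⟨G, hGsub, hGmem⟩ := ih hs'
      have hz : z ∈ I ⊔ J := hsub (by rw [Finset.coe_insert]; exact Set.mem_insert z _)
      obtain ⟨a, haI, b, hbJ, hab⟩ := (LieSubmodule.mem_sup _ _ _).1 hz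
      refine ⟨insert a (insert b G), ?_, ?_⟩
      · intro x hx
        rw [Finset.coe_insert, Finset.coe_insert] at hx
        rcases hx with rfl | rfl | hx
        · exact Or.inl haI
        · exact Or.inr hbJ
        · exact hGsub hx
      · intro w hw
        rcases Finset.mem_insert.1 hw with rfl | hws
        · rw [← hab]
          refine add_mem ?_ ?_
          · exact LieSubalgebra.subset_lieSpan (by
              rw [Finset.coe_insert]; exact Set.mem_insert a _)
          · exact LieSubalgebra.subset_lieSpan (by
              rw [Finset.coe_insert, Finset.coe_insert]
              exact Set.mem_insert_of_mem a (Set.mem_insert b _))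
        · refine LieSubalgebra.lieSpan_mono ?_ (hGmem w hws)
          intro x hx
          rw [Finset.coe_insert, Finset.coe_insert]
          exact Set.mem_insert_of_mem a (Set.mem_insert_of_mem b hx)
  obtain ⟨G, hGsub, hGmem⟩ := hex s hs
  have hfg := main_fg I J hI hJ G hGsub
  obtain ⟨n, hn⟩ := extNilpotent_of_fg I J hI hJ G hGsub hfg
  haveI hnil : LieRing.IsNilpotent ↥(LieSubalgebra.lieSpan K L (G : Set L)) :=
    (isNilpotent_iff_extLcs _).2 ⟨n, hn⟩
  have hle : LieSubalgebra.lieSpan K L (s : Set L) ≤ LieSubalgebra.lieSpan K L (G : Set L) :=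
    LieSubalgebra.lieSpan_le.2 fun z hz => hGmem z hz
  exact Function.Injective.lieAlgebra_isNilpotent (LieSubalgebra.inclusion_injective hle)
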